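/- Let M be a loopfree matroid on E and let S be a proper nonempty subset of E. If every basis of M contains the same number of elements of S, then S is a separator of M, i.e. rank_M(S) + rank_M(E \ S) = rank_M(E). -/
import Mathlib


/-- A matroid given by its rank function on subsets of a finite ground set. -/
structure MatroidRank (α : Type) [DecidableEq α] [Fintype α] where
  r : Finset α → ℕ
  r_empty : r ∅ = 0
  r_le_insert : ∀ A x, r A ≤ r (insert x A)
  insert_le : ∀ A x, r (insert x A) ≤ r A + 1
  r_local : ∀ A x y, r (insert x A) = r A → r (insert y A) = r A →
    r (insert x (insert y A)) = r A

variable {α : Type} [DecidableEq α] [Fintype α]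

/-- `F` is a flat (closed set) of the matroid `M`. -/
def MatroidRank.IsFlat (M : MatroidRank α) (F : Finset α) : Prop :=
  ∀ x ∉ F, M.r F < M.r (insert x F)

/-- Closure of a set in the matroid `M`. -/
def MatroidRank.cl (M : MatroidRank α) (A : Finset α) : Finset α :=
  Finset.univ.filter (fun x => M.r (insert x A) = M.r A)

/-- The matroid `M` has no loops. -/
def MatroidRank.Loopfree (M : MatroidRank α) : Prop :=
  ∀ x : α, M.r {x} = 1

/-- `B` is a basis of `M`: an independent set of full rank. -/
def MatroidRank.IsBase (M : MatroidRank α) (B : Finset α) : Prop :=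
  M.r B = B.card ∧ M.r B = M.r Finset.univ

/-- The weight of a finite set with respect to the weight vector `p`. -/
def wt (p : α → ℝ) (B : Finset α) : ℝ := ∑ i ∈ B, p i

/-- `B` is a basis of the matroid `M_p`, i.e. a basis of `M` of minimal `p`-weight. -/
def MatroidRank.IsMinBase (M : MatroidRank α) (p : α → ℝ) (B : Finset α) : Prop :=
  M.IsBase B ∧ ∀ B₂, M.IsBase B₂ → wt p B ≤ wt p B₂

namespace MatroidRank

lemma r_le_union (M : MatroidRank α) (T : Finset α) :
    ∀ A : Finset α, M.r A ≤ M.r (A ∪ T) := by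
  induction T using Finset.induction_on with
  | empty => simp
  | @insert y T' hy ih =>
    intro A
    rw [Finset.union_insert]
    exact le_trans (ih A) (M.r_le_insert _ _)

lemma r_mono (M : MatroidRank α) {A B : Finset α} (h : A ⊆ B) : M.r A ≤ M.r B := by
  have := M.r_le_union B A
  rwa [Finset.union_eq_right.mpr h] at this

lemma r_le_card (M : MatroidRank α) (A : Finset α) : M.r A ≤ A.card := by
  induction A using Finset.induction_on with
  | empty => simp [M.r_empty]
  | @insert y T' hy ih =>
    rw [Finset.card_insert_of_notMem hy]
    exact le_trans (M.insert_le _ _) (by omega)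

lemma r_union_le (M : MatroidRank α) (T : Finset α) :
    ∀ A : Finset α, M.r (A ∪ T) ≤ M.r A + T.card := by
  induction T using Finset.induction_on with
  | empty => simp
  | @insert y T' hy ih =>
    intro A
    rw [Finset.union_insert, Finset.card_insert_of_notMem hy]
    have h1 := M.insert_le (A ∪ T') y
    have h2 := ih A
    omega

lemma indep_subset (M : MatroidRank α) {I J : Finset α} (hIJ : I ⊆ J)
    (hJ : M.r J = J.card) : M.r I = I.card := by
  have h1 := M.r_le_card I
  have h2 := M.r_union_le (J \ I) I
  rw [Finset.union_sdiff_of_subset hIJ, Finset.card_sdiff_of_subset hIJ] at h2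
  have h3 := Finset.card_le_card hIJ
  omega

lemma r_union_eq (M : MatroidRank α) (T : Finset α) :
    ∀ C : Finset α, (∀ x ∈ T, M.r (insert x C) = M.r C) → M.r (C ∪ T) = M.r C := by
  induction T using Finset.induction_on with
  | empty => simp
  | @insert y T' hy ih =>
    intro C h
    have hyC : M.r (insert y C) = M.r C := h y (Finset.mem_insert_self y T')
    have h' : ∀ x ∈ T', M.r (insert x (insert y C)) = M.r (insert y C) := by
      intro x hx
      rw [hyC]
      exact M.r_local C x y (h x (Finset.mem_insert_of_mem hx)) hyC
    have := ih (insert y C) h'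
    rw [Finset.insert_union] at this
    rw [Finset.union_insert]
    rw [this, hyC]

lemma exists_basis_ext (M : MatroidRank α) {A I : Finset α} (hIA : I ⊆ A)
    (hI : M.r I = I.card) :
    ∃ J, I ⊆ J ∧ J ⊆ A ∧ M.r J = J.card ∧ M.r J = M.r A := by
  suffices h : ∀ n (I : Finset α), I ⊆ A → M.r I = I.card → A.card - I.card ≤ n →
      ∃ J, I ⊆ J ∧ J ⊆ A ∧ M.r J = J.card ∧ M.r J = M.r A by
    exact h A.card I hIA hI (by omega)
  intro n
  induction n with
  | zero =>
    intro I hIA hI hn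
    have hcard := Finset.card_le_card hIA
    have : I = A := Finset.eq_of_subset_of_card_le hIA (by omega)
    exact ⟨I, subset_refl I, hIA, hI, by rw [this]⟩
  | succ n ih =>
    intro I hIA hI hn
    by_cases hc : ∀ x ∈ A, M.r (insert x I) = M.r I
    · have hr : M.r (I ∪ A) = M.r I := M.r_union_eq A I hc
      rw [Finset.union_eq_right.mpr hIA] at hr
      exact ⟨I, subset_refl I, hIA, hI, hr.symm⟩
    · push_neg at hc
      obtain ⟨x, hxA, hx⟩ := hc
      have hxI : x ∉ I := fun h => hx (by rw [Finset.insert_eq_self.mpr h])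
      have hle := M.r_le_insert I x
      have hle2 := M.insert_le I x
      have h1 : M.r (insert x I) = (insert x I).card := by
        rw [Finset.card_insert_of_notMem hxI]
        omega
      have hsub : insert x I ⊆ A := Finset.insert_subset hxA hIA
      have hcard : A.card - (insert x I).card ≤ n := by
        rw [Finset.card_insert_of_notMem hxI]
        omega
      obtain ⟨J, hJ1, hJ2, hJ3, hJ4⟩ := ih (insert x I) hsub h1 hcard
      exact ⟨J, (Finset.subset_insert x I).trans hJ1, hJ2, hJ3, hJ4⟩

/-- The intersection of a base with `A` obtained by extending a basis of `A`
has cardinality `M.r A`. -/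
lemma exists_base_inter (M : MatroidRank α) (A : Finset α) :
    ∃ B, M.IsBase B ∧ (B ∩ A).card = M.r A := by
  have hempty : M.r (∅ : Finset α) = (∅ : Finset α).card := by simp [M.r_empty]
  obtain ⟨J, _, hJA, hJind, hJr⟩ :=
    M.exists_basis_ext (Finset.empty_subset A) hempty
  obtain ⟨B, hJB, _, hBind, hBr⟩ :=
    M.exists_basis_ext (Finset.subset_univ J) hJind
  refine ⟨B, ⟨hBind, hBr⟩, ?_⟩
  have hsub : J ⊆ B ∩ A := Finset.subset_inter hJB hJA
  have h1 : M.r (B ∩ A) = (B ∩ A).card :=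
    M.indep_subset Finset.inter_subset_left hBind
  have h2 : M.r (B ∩ A) ≤ M.r A := M.r_mono Finset.inter_subset_right
  have h3 := Finset.card_le_card hsub
  omega

end MatroidRank

/-- If every basis of a loopfree matroid M meets S in the same number of
elements, then S is a separator. -/
theorem separator_of_const_intersection (M : MatroidRank α) (hM : M.Loopfree)
    (S : Finset α) (hne : S.Nonempty) (hproper : S ≠ Finset.univ)
    (k : ℕ) (hk : ∀ B, M.IsBase B → (B ∩ S).card = k) :
    M.r S + M.r (Finset.univ \ S) = M.r Finset.univ := by
  obtain ⟨B, hB, hBS⟩ := M.exists_base_inter S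
  obtain ⟨B', hB', hB'S⟩ := M.exists_base_inter (Finset.univ \ S)
  have hk1 : k = M.r S := by rw [← hk B hB, hBS]
  have hk2 : (B' ∩ S).card = k := hk B' hB'
  have hsplit : (B' ∩ S).card + (B' ∩ (Finset.univ \ S)).card = B'.card := by
    have h1 : B' ∩ (Finset.univ \ S) = B' \ S := by
      ext x; simp
    rw [h1, Finset.card_inter_add_card_sdiff]
  rw [hB'S, hk2] at hsplit
  have hBcard : B'.card = M.r Finset.univ := by
    rw [← hB'.1, hB'.2]
  omega
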